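/- Let v and v' be true twin vertices of a graph G (N[v] = N[v']), and let S be a double neighborhood sequence of G containing both v and v'. Then there exists a double neighborhood sequence S' of G with the same underlying vertex set in which v and v' appear consecutively. -/

import Mathlib

open SimpleGraph

variable {V : Type*}

/-- The closed neighborhood of a vertex. -/
def cnbr (G : SimpleGraph V) (v : V) : Set V := insert v (G.neighborSet v)

/-- The number of vertices in the list `l` that dominate `u` (i.e. whose closed
neighborhood contains `u`). -/
noncomputable def domCount (G : SimpleGraph V) (u : V) (l : List V) : ℕ :=
  {w | w ∈ l ∧ u ∈ cnbr G w}.ncard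

/-- A double neighborhood sequence (DNS): a sequence of distinct vertices in which each
vertex dominates some vertex dominated at most once by its predecessors. -/
def IsDNS (G : SimpleGraph V) (l : List V) : Prop :=
  l.Nodup ∧ ∀ i : Fin l.length, ∃ u ∈ cnbr G (l.get i), domCount G u (l.take i) ≤ 1

/-- A double dominating sequence (DDS): a DNS whose underlying set is doubly dominating. -/
def IsDDS (G : SimpleGraph V) (l : List V) : Prop :=
  IsDNS G l ∧ ∀ v, 2 ≤ domCount G v l

/-- The Grundy double domination number: maximum length of a DDS. -/
noncomputable def gddn (G : SimpleGraph V) : ℕ :=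
  sSup {n | ∃ l : List V, IsDDS G l ∧ l.length = n}

/-- The maximum double neighborhood number: maximum length of a DNS. -/
noncomputable def mdnn (G : SimpleGraph V) : ℕ :=
  sSup {n | ∃ l : List V, IsDNS G l ∧ l.length = n}

/-- A legal (Grundy domination) sequence. -/
def IsLegal (G : SimpleGraph V) (l : List V) : Prop :=
  l.Nodup ∧ ∀ i : Fin l.length, ∃ u ∈ cnbr G (l.get i), domCount G u (l.take i) = 0

/-- A dominating sequence: legal sequence whose underlying set dominates. -/
def IsDomSeq (G : SimpleGraph V) (l : List V) : Prop :=
  IsLegal G l ∧ ∀ v, 1 ≤ domCount G v l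

/-- The Grundy domination number: maximum length of a dominating sequence. -/
noncomputable def grundy (G : SimpleGraph V) : ℕ :=
  sSup {n | ∃ l : List V, IsDomSeq G l ∧ l.length = n}

/-- The double domination number: minimum size of a double dominating set. -/
noncomputable def ddomNum (G : SimpleGraph V) : ℕ :=
  sInf {n | ∃ D : Set V, (∀ v, 2 ≤ {w | w ∈ D ∧ v ∈ cnbr G w}.ncard) ∧ D.ncard = n}

lemma domCount_finite (G : SimpleGraph V) (u : V) (l : List V) :
    {w | w ∈ l ∧ u ∈ cnbr G w}.Finite :=
  l.finite_toSet.subset (fun w hw => hw.1)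

lemma domCount_mono (G : SimpleGraph V) (u : V) {l₁ l₂ : List V}
    (h : ∀ x, x ∈ l₁ → x ∈ l₂) : domCount G u l₁ ≤ domCount G u l₂ :=
  Set.ncard_le_ncard (fun w hw => ⟨h w hw.1, hw.2⟩) (domCount_finite G u l₂)

lemma domCount_congr (G : SimpleGraph V) (u : V) {l₁ l₂ : List V}
    (h : ∀ x, x ∈ l₁ ↔ x ∈ l₂) : domCount G u l₁ = domCount G u l₂ := by
  unfold domCount
  congr 1
  ext w
  simp [h w]

lemma domCount_insert (G : SimpleGraph V) {u v : V} {l l' : List V}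
    (hu : u ∈ cnbr G v) (hv : v ∉ l) (h : ∀ x, x ∈ l' ↔ x = v ∨ x ∈ l) :
    domCount G u l' = domCount G u l + 1 := by
  have hset : {w | w ∈ l' ∧ u ∈ cnbr G w} = insert v {w | w ∈ l ∧ u ∈ cnbr G w} := by
    ext w
    simp only [Set.mem_setOf_eq, Set.mem_insert_iff, h w]
    constructor
    · rintro ⟨hw1 | hw1, hw2⟩
      · exact Or.inl hw1
      · exact Or.inr ⟨hw1, hw2⟩
    · rintro (rfl | ⟨hw1, hw2⟩)
      · exact ⟨Or.inl rfl, hu⟩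
      · exact ⟨Or.inr hw1, hw2⟩
  rw [domCount, hset, Set.ncard_insert_of_notMem (by simp [hv]) (domCount_finite G u l)]
  rfl

lemma isDNS_iff (G : SimpleGraph V) (l : List V) :
    IsDNS G l ↔ l.Nodup ∧ ∀ p x q, l = p ++ x :: q → ∃ u ∈ cnbr G x, domCount G u p ≤ 1 := by
  constructor
  · rintro ⟨hnd, h⟩
    refine ⟨hnd, fun p x q hpq => ?_⟩
    have hlen : p.length < l.length := by subst hpq; simp
    obtain ⟨u, hu1, hu2⟩ := h ⟨p.length, hlen⟩
    have hx : l.get ⟨p.length, hlen⟩ = x := by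
      subst hpq; simp [List.getElem_append_right]
    have ht : l.take p.length = p := by
      subst hpq; exact List.take_left
    rw [hx] at hu1
    rw [ht] at hu2
    exact ⟨u, hu1, hu2⟩
  · rintro ⟨hnd, h⟩
    refine ⟨hnd, fun i => ?_⟩
    exact h (l.take i) (l.get i) (l.drop (i+1)) (by
      conv_lhs => rw [← List.take_append_drop i l]
      congr 1
      exact (List.getElem_cons_drop i.isLt).symm)

lemma key (G : SimpleGraph V) (v v' : V) (htwin : cnbr G v = cnbr G v')
    (A B C : List V) (hS : IsDNS G (A ++ v :: B ++ v' :: C)) :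
    IsDNS G (A ++ B ++ v :: v' :: C) := by
  rw [isDNS_iff] at hS ⊢
  obtain ⟨hnd, h⟩ := hS
  have hperm : (A ++ B ++ v :: v' :: C).Perm (A ++ v :: B ++ v' :: C) := by
    rw [List.append_assoc A B, List.append_assoc A (v :: B)]
    exact List.Perm.append_left A (@List.perm_middle _ v B (v' :: C))
  have hnd' : (A ++ B ++ v :: v' :: C).Nodup := hperm.nodup_iff.mpr hnd
  have hvAB : v ∉ A ++ B := by
    intro hmem
    exact (List.disjoint_of_nodup_append hnd') hmem (by simp)
  refine ⟨hnd', fun p x q hpq => ?_⟩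
  rcases List.append_eq_append_iff.mp hpq with ⟨a', hp, ha⟩ | ⟨c', hab, hxq⟩
  · -- p = (A ++ B) ++ a',  v :: v' :: C = a' ++ x :: q
    rcases a' with _ | ⟨y, _ | ⟨z, t⟩⟩
    · -- a' = [] : x = v, p = A ++ B
      simp only [List.nil_append, List.cons.injEq] at ha
      obtain ⟨hx, hq⟩ := ha
      simp only [List.append_nil] at hp
      subst hp
      rw [← hx]
      obtain ⟨u, hu1, hu2⟩ := h (A ++ v :: B) v' C (by simp)
      refine ⟨u, htwin ▸ hu1, le_trans (domCount_mono G u (fun y hy => ?_)) hu2⟩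
      simp only [List.mem_append, List.mem_cons] at hy ⊢
      tauto
    · -- a' = [y] : y = v, x = v', p = A ++ B ++ [v]
      simp only [List.cons_append, List.nil_append, List.cons.injEq] at ha
      obtain ⟨hy, hx, hq⟩ := ha
      rw [← hy] at hp
      subst hp
      rw [← hx]
      obtain ⟨u, hu1, hu2⟩ := h (A ++ v :: B) v' C (by simp)
      have huv : u ∈ cnbr G v := htwin.symm ▸ hu1
      have e1 : domCount G u (A ++ v :: B) = domCount G u (A ++ B) + 1 := by
        refine domCount_insert G huv hvAB (fun y => ?_)
        simp only [List.mem_append, List.mem_cons]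
        tauto
      have e2 : domCount G u (A ++ B ++ [v]) = domCount G u (A ++ B) + 1 := by
        refine domCount_insert G huv hvAB (fun y => ?_)
        simp only [List.mem_append, List.mem_cons, List.not_mem_nil, List.mem_singleton]
        tauto
      exact ⟨u, hu1, by omega⟩
    · -- a' = y :: z :: t : x ∈ C
      simp only [List.cons_append, List.cons.injEq] at ha
      obtain ⟨hy, hz, hC⟩ := ha
      rw [← hy, ← hz] at hp
      subst hp
      obtain ⟨u, hu1, hu2⟩ := h (A ++ v :: B ++ v' :: t) x q (by rw [hC]; simp)
      refine ⟨u, hu1, le_trans (le_of_eq (domCount_congr G u (fun y => ?_))) hu2⟩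
      simp only [List.mem_append, List.mem_cons]
      tauto
  · -- A ++ B = p ++ c',  x :: q = c' ++ v :: v' :: C
    rcases c' with _ | ⟨y, c''⟩
    · -- c' = [] : x = v, p = A ++ B
      simp only [List.append_nil] at hab
      simp only [List.nil_append, List.cons.injEq] at hxq
      obtain ⟨hx, hq⟩ := hxq
      rw [hx]
      rw [← hab]
      obtain ⟨u, hu1, hu2⟩ := h (A ++ v :: B) v' C (by simp)
      refine ⟨u, htwin ▸ hu1, le_trans (domCount_mono G u (fun y hy => ?_)) hu2⟩
      simp only [List.mem_append, List.mem_cons] at hy ⊢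
      tauto
    · -- c' = y :: c'' : x = y and x occurs in A ++ B
      simp only [List.cons_append, List.cons.injEq] at hxq
      obtain ⟨hx, hq⟩ := hxq
      rw [← hx] at hab
      rcases List.append_eq_append_iff.mp hab with ⟨t, hpt, hB⟩ | ⟨s, hA, hsb⟩
      · -- p = A ++ t, B = t ++ x :: c'' : x in B
        obtain ⟨u, hu1, hu2⟩ := h (A ++ v :: t) x (c'' ++ v' :: C) (by rw [hB]; simp)
        refine ⟨u, hu1, le_trans (domCount_mono G u (fun y hy => ?_)) hu2⟩
        rw [hpt] at hy
        simp only [List.mem_append, List.mem_cons] at hy ⊢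
        tauto
      · rcases s with _ | ⟨z, s'⟩
        · -- A = p, B = x :: c''
          simp only [List.append_nil] at hA
          simp only [List.nil_append] at hsb
          obtain ⟨u, hu1, hu2⟩ := h (A ++ [v]) x (c'' ++ v' :: C) (by rw [← hsb]; simp)
          refine ⟨u, hu1, le_trans (domCount_mono G u (fun y hy => ?_)) hu2⟩
          rw [← hA] at hy
          simp only [List.mem_append, List.mem_singleton] at hy ⊢
          tauto
        · -- A = p ++ z :: s', x :: c'' = z :: (s' ++ B) : x = z, x in A
          simp only [List.cons_append, List.cons.injEq] at hsb
          obtain ⟨hz, hc⟩ := hsb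
          rw [← hz] at hA
          obtain ⟨u, hu1, hu2⟩ := h p x (s' ++ v :: B ++ v' :: C) (by rw [hA]; simp)
          exact ⟨u, hu1, hu2⟩


/-- if a DNS contains a pair of true twins, the sequence can be rearranged
(keeping the same underlying set) so that the twins appear consecutively. -/
theorem stmt12 (G : SimpleGraph V) (v v' : V) (hne : v ≠ v')
    (htwin : cnbr G v = cnbr G v') (S : List V) (hS : IsDNS G S)
    (hv : v ∈ S) (hv' : v' ∈ S) :
    ∃ S' : List V, IsDNS G S' ∧ (∀ x, x ∈ S' ↔ x ∈ S) ∧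
      ∃ l₁ l₂ : List V, S' = l₁ ++ v :: v' :: l₂ ∨ S' = l₁ ++ v' :: v :: l₂ := by
  obtain ⟨p, q, rfl⟩ := List.append_of_mem hv
  rw [List.mem_append, List.mem_cons] at hv'
  rcases hv' with hv'p | (hv'v | hv'q)
  · -- v' ∈ p : v' comes before v
    obtain ⟨A, B, rfl⟩ := List.append_of_mem hv'p
    have hS' : IsDNS G (A ++ v' :: B ++ v :: q) := by
      have he : A ++ v' :: B ++ v :: q = (A ++ v' :: B) ++ v :: q := by simp
      rw [he]; exact hS
    have hkey := key G v' v htwin.symm A B q hS'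
    refine ⟨A ++ B ++ v' :: v :: q, hkey, fun x => ?_, A ++ B, q, Or.inr rfl⟩
    simp only [List.mem_append, List.mem_cons]
    tauto
  · exact absurd hv'v.symm hne
  · -- v' ∈ q : v comes before v'
    obtain ⟨B, C, rfl⟩ := List.append_of_mem hv'q
    have hS' : IsDNS G (p ++ v :: B ++ v' :: C) := by
      have he : p ++ v :: B ++ v' :: C = p ++ v :: (B ++ v' :: C) := by simp
      rw [he]; exact hS
    have hkey := key G v v' htwin p B C hS'
    refine ⟨p ++ B ++ v :: v' :: C, hkey, fun x => ?_, p ++ B, C, Or.inl rfl⟩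
    simp only [List.mem_append, List.mem_cons]
    tauto
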